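/- arXiv:1507.03569 — 2 statements merged into one kernel-verified Lean document; each statement's English description precedes it below -/
import Mathlib

section
/- Let n ≥ 1 and let D* = L^n be the n-fold iterate of the operator (Lg)(r) = −(1/(2π))·g′(r)/sinh r. Then for every smooth function g : ℝ → ℂ and every r ∈ ℝ with r ≠ 0, the hyperbolic intertwining identity holds: (D*g)″(r) + 2n·(cosh r/sinh r)·(D*g)′(r) = (D*(g″ − n²·g))(r). -/
/-- The operator `L` given by `(L g)(r) = -(1/(2π)) g'(r)/sinh r`. -/
noncomputable def Lhyp (g : ℝ → ℂ) : ℝ → ℂ :=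
  fun r => -(1 / (2 * (Real.pi : ℂ))) * deriv g r / (Real.sinh r : ℂ)

namespace LhypAux

def S : Set ℝ := {x | x ≠ 0}

lemma isOpen_S : IsOpen S := isOpen_ne

lemma sinh_ne {r : ℝ} (hr : r ≠ 0) : ((Real.sinh r : ℝ) : ℂ) ≠ 0 := by
  exact_mod_cast Real.sinh_ne_zero.2 hr

lemma contDiffOn_deriv {f : ℝ → ℂ} (hf : ContDiffOn ℝ (⊤ : ℕ∞) f S) :
    ContDiffOn ℝ (⊤ : ℕ∞) (deriv f) S :=
  ((contDiffOn_infty_iff_deriv_of_isOpen isOpen_S).1 hf).2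

lemma hasDerivAt_of_smooth {f : ℝ → ℂ} (hf : ContDiffOn ℝ (⊤ : ℕ∞) f S) {x : ℝ} (hx : x ≠ 0) :
    HasDerivAt f (deriv f x) x := by
  have h := (hf.contDiffAt (isOpen_S.mem_nhds hx)).differentiableAt (by simp)
  exact h.hasDerivAt

lemma hasDerivAt_csinh (x : ℝ) :
    HasDerivAt (fun s : ℝ => ((Real.sinh s : ℝ) : ℂ)) ((Real.cosh x : ℂ)) x :=
  (Real.hasDerivAt_sinh x).ofReal_comp

lemma hasDerivAt_ccosh (x : ℝ) :
    HasDerivAt (fun s : ℝ => ((Real.cosh s : ℝ) : ℂ)) ((Real.sinh x : ℂ)) x :=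
  (Real.hasDerivAt_cosh x).ofReal_comp

lemma Lhyp_smooth {f : ℝ → ℂ} (hf : ContDiffOn ℝ (⊤ : ℕ∞) f S) :
    ContDiffOn ℝ (⊤ : ℕ∞) (Lhyp f) S := by
  have h1 : ContDiffOn ℝ (⊤ : ℕ∞) (fun x : ℝ => -(1 / (2 * (Real.pi : ℂ))) * deriv f x) S :=
    (contDiffOn_const (c := -(1 / (2 * (Real.pi : ℂ))))).mul (contDiffOn_deriv hf)
  have h2 : ContDiffOn ℝ (⊤ : ℕ∞) (fun x : ℝ => ((Real.sinh x : ℝ) : ℂ)) S :=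
    (Complex.ofRealCLM.contDiff.comp Real.contDiff_sinh).contDiffOn
  have h3 : ContDiffOn ℝ (⊤ : ℕ∞) (fun x : ℝ => -(1 / (2 * (Real.pi : ℂ))) * deriv f x * (((Real.sinh x : ℝ) : ℂ))⁻¹) S :=
    h1.mul (h2.inv (fun x hx => sinh_ne hx))
  show ContDiffOn ℝ (⊤ : ℕ∞) (fun r => -(1 / (2 * (Real.pi : ℂ))) * deriv f r / (Real.sinh r : ℂ)) S
  simpa only [div_eq_mul_inv] using h3

lemma hasDerivAt_Lhyp {f : ℝ → ℂ} (hf : ContDiffOn ℝ (⊤ : ℕ∞) f S) {x : ℝ} (hx : x ≠ 0) :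
    HasDerivAt (Lhyp f)
      ((-(1 / (2 * (Real.pi : ℂ))) * deriv (deriv f) x * (Real.sinh x : ℂ)
        - -(1 / (2 * (Real.pi : ℂ))) * deriv f x * (Real.cosh x : ℂ)) / (Real.sinh x : ℂ) ^ 2) x := by
  have h := (((hasDerivAt_of_smooth (contDiffOn_deriv hf) hx).const_mul
      (-(1 / (2 * (Real.pi : ℂ))))).div (hasDerivAt_csinh x) (sinh_ne hx))
  exact h

lemma hasDerivAt_W {f : ℝ → ℂ} (hf : ContDiffOn ℝ (⊤ : ℕ∞) f S) (a : ℂ) {x : ℝ} (hx : x ≠ 0) :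
    HasDerivAt (fun s => deriv (deriv f) s
        + 2 * a * ((Real.cosh s : ℂ) / (Real.sinh s : ℂ)) * deriv f s - (2 * a + 1) * f s)
      (deriv (deriv (deriv f)) x
        + (2 * a * (((Real.sinh x : ℂ) * (Real.sinh x : ℂ)
              - (Real.cosh x : ℂ) * (Real.cosh x : ℂ)) / (Real.sinh x : ℂ) ^ 2) * deriv f x
           + 2 * a * ((Real.cosh x : ℂ) / (Real.sinh x : ℂ)) * deriv (deriv f) x)
        - (2 * a + 1) * deriv f x) x := by
  have hf1 := contDiffOn_deriv hf
  have hf2 := contDiffOn_deriv hf1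
  have hcoth : HasDerivAt (fun s : ℝ => (Real.cosh s : ℂ) / (Real.sinh s : ℂ))
      (((Real.sinh x : ℂ) * (Real.sinh x : ℂ)
          - (Real.cosh x : ℂ) * (Real.cosh x : ℂ)) / (Real.sinh x : ℂ) ^ 2) x :=
    (hasDerivAt_ccosh x).div (hasDerivAt_csinh x) (sinh_ne hx)
  exact ((hasDerivAt_of_smooth hf2 hx).add
      ((hcoth.const_mul (2 * a)).mul (hasDerivAt_of_smooth hf1 hx))).sub
    ((hasDerivAt_of_smooth hf hx).const_mul (2 * a + 1))

lemma stepB {f : ℝ → ℂ} (hf : ContDiffOn ℝ (⊤ : ℕ∞) f S) (a : ℂ) {r : ℝ} (hr : r ≠ 0) :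
    deriv (deriv (Lhyp f)) r
      + 2 * (a + 1) * ((Real.cosh r : ℂ) / (Real.sinh r : ℂ)) * deriv (Lhyp f) r
    = Lhyp (fun s => deriv (deriv f) s
        + 2 * a * ((Real.cosh s : ℂ) / (Real.sinh s : ℂ)) * deriv f s - (2 * a + 1) * f s) r := by
  have hf1 := contDiffOn_deriv hf
  have hf2 := contDiffOn_deriv hf1
  have hsne := sinh_ne hr
  have hπ : (Real.pi : ℂ) ≠ 0 := by exact_mod_cast Real.pi_ne_zero
  -- first derivative of Lhyp f at r
  have e1 : deriv (Lhyp f) r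
      = (-(1 / (2 * (Real.pi : ℂ))) * deriv (deriv f) r * (Real.sinh r : ℂ)
        - -(1 / (2 * (Real.pi : ℂ))) * deriv f r * (Real.cosh r : ℂ)) / (Real.sinh r : ℂ) ^ 2 :=
    (hasDerivAt_Lhyp hf hr).deriv
  -- second derivative of Lhyp f at r
  have e2 : deriv (deriv (Lhyp f)) r
      = deriv (fun x : ℝ => (-(1 / (2 * (Real.pi : ℂ))) * deriv (deriv f) x * (Real.sinh x : ℂ)
          - -(1 / (2 * (Real.pi : ℂ))) * deriv f x * (Real.cosh x : ℂ)) / (Real.sinh x : ℂ) ^ 2) r := by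
    apply Filter.EventuallyEq.deriv_eq
    filter_upwards [isOpen_S.mem_nhds (show r ∈ S from hr)] with x hx
    exact (hasDerivAt_Lhyp hf hx).deriv
  have hN : HasDerivAt (fun x : ℝ => -(1 / (2 * (Real.pi : ℂ))) * deriv (deriv f) x * (Real.sinh x : ℂ)
        - -(1 / (2 * (Real.pi : ℂ))) * deriv f x * (Real.cosh x : ℂ))
      ((-(1 / (2 * (Real.pi : ℂ))) * deriv (deriv (deriv f)) r * (Real.sinh r : ℂ)
          + -(1 / (2 * (Real.pi : ℂ))) * deriv (deriv f) r * (Real.cosh r : ℂ))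
        - (-(1 / (2 * (Real.pi : ℂ))) * deriv (deriv f) r * (Real.cosh r : ℂ)
          + -(1 / (2 * (Real.pi : ℂ))) * deriv f r * (Real.sinh r : ℂ))) r :=
    ((((hasDerivAt_of_smooth hf2 hr).const_mul _).mul (hasDerivAt_csinh r)).sub
      (((hasDerivAt_of_smooth hf1 hr).const_mul _).mul (hasDerivAt_ccosh r)))
  have hden : HasDerivAt (fun x : ℝ => (Real.sinh x : ℂ) ^ 2)
      (2 * (Real.sinh r : ℂ) * (Real.cosh r : ℂ)) r := by
    have h := (hasDerivAt_csinh r).fun_mul (hasDerivAt_csinh r)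
    have heq : (fun x : ℝ => (Real.sinh x : ℂ) ^ 2) = fun x : ℝ => (Real.sinh x : ℂ) * (Real.sinh x : ℂ) := by
      funext x; ring
    rw [heq]
    exact h.congr_deriv (by ring)
  have e3 : deriv (fun x : ℝ => (-(1 / (2 * (Real.pi : ℂ))) * deriv (deriv f) x * (Real.sinh x : ℂ)
          - -(1 / (2 * (Real.pi : ℂ))) * deriv f x * (Real.cosh x : ℂ)) / (Real.sinh x : ℂ) ^ 2) r
      = (((-(1 / (2 * (Real.pi : ℂ))) * deriv (deriv (deriv f)) r * (Real.sinh r : ℂ)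
            + -(1 / (2 * (Real.pi : ℂ))) * deriv (deriv f) r * (Real.cosh r : ℂ))
          - (-(1 / (2 * (Real.pi : ℂ))) * deriv (deriv f) r * (Real.cosh r : ℂ)
            + -(1 / (2 * (Real.pi : ℂ))) * deriv f r * (Real.sinh r : ℂ))) * (Real.sinh r : ℂ) ^ 2
        - (-(1 / (2 * (Real.pi : ℂ))) * deriv (deriv f) r * (Real.sinh r : ℂ)
            - -(1 / (2 * (Real.pi : ℂ))) * deriv f r * (Real.cosh r : ℂ))
          * (2 * (Real.sinh r : ℂ) * (Real.cosh r : ℂ))) / ((Real.sinh r : ℂ) ^ 2) ^ 2 :=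
    (hN.div hden (pow_ne_zero 2 hsne)).deriv
  have e4 : deriv (fun s => deriv (deriv f) s
        + 2 * a * ((Real.cosh s : ℂ) / (Real.sinh s : ℂ)) * deriv f s - (2 * a + 1) * f s) r
      = deriv (deriv (deriv f)) r
        + (2 * a * (((Real.sinh r : ℂ) * (Real.sinh r : ℂ)
              - (Real.cosh r : ℂ) * (Real.cosh r : ℂ)) / (Real.sinh r : ℂ) ^ 2) * deriv f r
           + 2 * a * ((Real.cosh r : ℂ) / (Real.sinh r : ℂ)) * deriv (deriv f) r)
        - (2 * a + 1) * deriv f r :=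
    (hasDerivAt_W hf a hr).deriv
  rw [e2, e3, e1]
  unfold Lhyp
  rw [e4]
  have hsne' : Complex.sinh (r : ℂ) ≠ 0 := by
    rw [← Complex.ofReal_sinh]; exact_mod_cast hsne
  have hπ' : (Real.pi : ℂ) ≠ 0 := hπ
  field_simp [hsne', hπ']
  ring_nf

lemma Lhyp_sub {X Y : ℝ → ℂ} (κ : ℂ) {s : ℝ} (hX : DifferentiableAt ℝ X s)
    (hY : DifferentiableAt ℝ Y s) :
    Lhyp (fun t => X t - κ * Y t) s = Lhyp X s - κ * Lhyp Y s := by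
  unfold Lhyp
  rw [deriv_fun_sub hX (hY.const_mul κ), deriv_const_mul κ hY]
  ring

lemma Lhyp_congrOn {f g : ℝ → ℂ} (h : Set.EqOn f g S) : Set.EqOn (Lhyp f) (Lhyp g) S := by
  intro x hx
  unfold Lhyp
  rw [Filter.EventuallyEq.deriv_eq (Filter.eventuallyEq_of_mem (isOpen_S.mem_nhds hx) h)]

lemma Lhyp_iter_congrOn (n : ℕ) : ∀ {f g : ℝ → ℂ}, Set.EqOn f g S →
    Set.EqOn (Lhyp^[n] f) (Lhyp^[n] g) S := by
  induction n with
  | zero => intro f g h; simpa using h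
  | succ n ih =>
    intro f g h
    simp only [Function.iterate_succ_apply]
    exact ih (Lhyp_congrOn h)

lemma key : ∀ n : ℕ, ∀ f : ℝ → ℂ, ContDiffOn ℝ (⊤ : ℕ∞) f S → ∀ a : ℂ, ∀ r : ℝ, r ≠ 0 →
    deriv (deriv (Lhyp^[n] f)) r
      + 2 * (a + (n : ℂ)) * ((Real.cosh r : ℂ) / (Real.sinh r : ℂ)) * deriv (Lhyp^[n] f) r
    = Lhyp^[n] (fun s => deriv (deriv f) s
        + 2 * a * ((Real.cosh s : ℂ) / (Real.sinh s : ℂ)) * deriv f s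
        - ((a + (n : ℂ)) ^ 2 - a ^ 2) * f s) r := by
  intro n
  induction n with
  | zero =>
    intro f hf a r hr
    simp only [Function.iterate_zero_apply, Nat.cast_zero]
    ring
  | succ n ih =>
    intro f hf a r hr
    have hLf := Lhyp_smooth hf
    have IH := ih (Lhyp f) hLf (a + 1) r hr
    simp only [Function.iterate_succ_apply]
    have hcoef : (2 * (a + ((n + 1 : ℕ) : ℂ)) : ℂ) = 2 * ((a + 1) + (n : ℂ)) := by
      push_cast; ring
    rw [hcoef, IH]
    -- now: Lhyp^[n] E r = Lhyp^[n] (Lhyp T') r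
    apply Lhyp_iter_congrOn n _ (show r ∈ S from hr)
    intro s hs
    have hs' : s ≠ 0 := hs
    have hW : DifferentiableAt ℝ (fun t => deriv (deriv f) t
        + 2 * a * ((Real.cosh t : ℂ) / (Real.sinh t : ℂ)) * deriv f t - (2 * a + 1) * f t) s :=
      (hasDerivAt_W hf a hs').differentiableAt
    have hfd : DifferentiableAt ℝ f s := (hasDerivAt_of_smooth hf hs').differentiableAt
    calc deriv (deriv (Lhyp f)) s
          + 2 * (a + 1) * ((Real.cosh s : ℂ) / (Real.sinh s : ℂ)) * deriv (Lhyp f) s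
          - (((a + 1) + (n : ℂ)) ^ 2 - (a + 1) ^ 2) * Lhyp f s
        = Lhyp (fun t => deriv (deriv f) t
            + 2 * a * ((Real.cosh t : ℂ) / (Real.sinh t : ℂ)) * deriv f t - (2 * a + 1) * f t) s
          - (((a + 1) + (n : ℂ)) ^ 2 - (a + 1) ^ 2) * Lhyp f s := by
          rw [stepB hf a hs']
      _ = Lhyp (fun t => (deriv (deriv f) t
            + 2 * a * ((Real.cosh t : ℂ) / (Real.sinh t : ℂ)) * deriv f t - (2 * a + 1) * f t)
            - (((a + 1) + (n : ℂ)) ^ 2 - (a + 1) ^ 2) * f t) s :=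
          (Lhyp_sub _ hW hfd).symm
      _ = Lhyp (fun t => deriv (deriv f) t
            + 2 * a * ((Real.cosh t : ℂ) / (Real.sinh t : ℂ)) * deriv f t
            - ((a + ((n + 1 : ℕ) : ℂ)) ^ 2 - a ^ 2) * f t) s := by
          congr 1
          funext t
          push_cast
          ring

end LhypAux

/-- Intertwining property of `D* = L^n` with the radial hyperbolic Laplacian
on `H^{2n+1}`. -/
theorem stmt_0 (n : ℕ) (hn : 1 ≤ n) (g : ℝ → ℂ) (hg : ContDiff ℝ (⊤ : ℕ∞) g)
    (r : ℝ) (hr : r ≠ 0) :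
    deriv (deriv (Lhyp^[n] g)) r
      + 2 * (n : ℂ) * ((Real.cosh r : ℂ) / (Real.sinh r : ℂ)) * deriv (Lhyp^[n] g) r
      = Lhyp^[n] (fun s => deriv (deriv g) s - (n : ℂ) ^ 2 * g s) r := by
  have h := LhypAux.key n g hg.contDiffOn 0 r hr
  have e1 : (fun s => deriv (deriv g) s
      + 2 * 0 * ((Real.cosh s : ℂ) / (Real.sinh s : ℂ)) * deriv g s
      - ((0 + (n : ℂ)) ^ 2 - 0 ^ 2) * g s)
      = fun s => deriv (deriv g) s - (n : ℂ) ^ 2 * g s := by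
    funext s; ring
  rw [e1] at h
  simpa using h
end

section
/- Let n ≥ 1 and define γ(t, r) = e^{−t n²/2} · (L^n G_t)(r), where G_t(r) = e^{−r²/(2t)}/√(2πt) and L is the n-fold iterated operator (Lg)(r) = −(1/(2π))·g′(r)/sinh r. Then γ satisfies the radial hyperbolic heat equation: for every t > 0 and every r ∈ ℝ with r ≠ 0, ∂γ/∂t (t, r) = (1/2)·( ∂²γ/∂r² (t, r) + 2n·(cosh r/sinh r)·∂γ/∂r (t, r) ). -/
/-- The heat kernel of `H^{2n+1}`, `γ(t,r) = e^{-tn²/2} (Lⁿ G_t)(r)`, where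
`G_t(r) = e^{-r²/(2t)}/√(2πt)` is the one-dimensional Euclidean heat kernel. -/
noncomputable def gammaHyp (n : ℕ) (t : ℝ) : ℝ → ℂ :=
  fun r => (Real.exp (-(t * (n : ℝ) ^ 2) / 2) : ℂ) *
    Lhyp^[n] (fun s => ((Real.exp (-(s ^ 2) / (2 * t)) / Real.sqrt (2 * Real.pi * t) : ℝ) : ℂ)) r

/- ### Auxiliary development -/

open Filter Topology

/-- The Euclidean heat kernel as a jointly-defined function of `(t, r)`. -/
noncomputable def Gf : ℝ × ℝ → ℂ :=
  fun p => ((Real.exp (-(p.2 ^ 2) / (2 * p.1)) / Real.sqrt (2 * Real.pi * p.1) : ℝ) : ℂ)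

/-- The operator `L` acting in the second variable of a jointly-defined function. -/
noncomputable def Lw (w : ℝ × ℝ → ℂ) : ℝ × ℝ → ℂ :=
  fun p => Lhyp (fun s => w (p.1, s)) p.2

/-- Partial derivative in the first (time) variable. -/
noncomputable def pt (w : ℝ × ℝ → ℂ) : ℝ × ℝ → ℂ :=
  fun p => deriv (fun s => w (s, p.2)) p.1

/-- Partial derivative in the second (space) variable. -/
noncomputable def pr (w : ℝ × ℝ → ℂ) : ℝ × ℝ → ℂ :=
  fun p => deriv (fun s => w (p.1, s)) p.2

/-- The open domain `t > 0`, `r ≠ 0`. -/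
def Uo : Set (ℝ × ℝ) := {p | 0 < p.1 ∧ p.2 ≠ 0}

lemma isOpen_Uo : IsOpen Uo := by
  have : Uo = (fun p : ℝ × ℝ => p.1) ⁻¹' (Set.Ioi 0) ∩ (fun p : ℝ × ℝ => p.2) ⁻¹' ({0}ᶜ) := by
    ext p; simp [Uo, Set.mem_setOf_eq]
  rw [this]
  exact (isOpen_Ioi.preimage continuous_fst).inter (isOpen_compl_singleton.preimage continuous_snd)

lemma near_r {p : ℝ × ℝ} (hp : p ∈ Uo) : ∀ᶠ s in 𝓝 p.2, (p.1, s) ∈ Uo := by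
  have h := isOpen_Uo.mem_nhds hp
  exact (continuous_const.prodMk continuous_id).continuousAt.preimage_mem_nhds (by simpa using h)

lemma near_t {p : ℝ × ℝ} (hp : p ∈ Uo) : ∀ᶠ s in 𝓝 p.1, (s, p.2) ∈ Uo := by
  have h := isOpen_Uo.mem_nhds hp
  exact (continuous_id.prodMk continuous_const).continuousAt.preimage_mem_nhds (by simpa using h)

lemma hasDerivAt_slice_r {w : ℝ × ℝ → ℂ} {p : ℝ × ℝ} (hw : DifferentiableAt ℝ w p) :
    HasDerivAt (fun s => w (p.1, s)) (fderiv ℝ w p ((0 : ℝ), (1 : ℝ))) p.2 := by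
  have h1 : HasDerivAt (fun s : ℝ => ((p.1 : ℝ), s)) ((0 : ℝ), (1 : ℝ)) p.2 :=
    (hasDerivAt_const _ _).prodMk (hasDerivAt_id _)
  simpa [Function.comp_def] using hw.hasFDerivAt.comp_hasDerivAt p.2 h1

lemma hasDerivAt_slice_t {w : ℝ × ℝ → ℂ} {p : ℝ × ℝ} (hw : DifferentiableAt ℝ w p) :
    HasDerivAt (fun s => w (s, p.2)) (fderiv ℝ w p ((1 : ℝ), (0 : ℝ))) p.1 := by
  have h1 : HasDerivAt (fun s : ℝ => (s, (p.2 : ℝ))) ((1 : ℝ), (0 : ℝ)) p.1 :=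
    (hasDerivAt_id _).prodMk (hasDerivAt_const _ _)
  simpa [Function.comp_def] using hw.hasFDerivAt.comp_hasDerivAt p.1 h1

lemma pr_eq_fderiv {w : ℝ × ℝ → ℂ} {p : ℝ × ℝ} (hw : DifferentiableAt ℝ w p) :
    pr w p = fderiv ℝ w p ((0 : ℝ), (1 : ℝ)) := (hasDerivAt_slice_r hw).deriv

lemma pt_eq_fderiv {w : ℝ × ℝ → ℂ} {p : ℝ × ℝ} (hw : DifferentiableAt ℝ w p) :
    pt w p = fderiv ℝ w p ((1 : ℝ), (0 : ℝ)) := (hasDerivAt_slice_t hw).deriv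

lemma diffAt_of_contDiffOn {w : ℝ × ℝ → ℂ} {p : ℝ × ℝ} (hw : ContDiffOn ℝ (⊤ : ℕ∞) w Uo)
    (hp : p ∈ Uo) : DifferentiableAt ℝ w p :=
  (hw.contDiffAt (isOpen_Uo.mem_nhds hp)).differentiableAt (by norm_cast)

/-- Slice derivative in `r` of a smooth function. -/
lemma sliceR {w : ℝ × ℝ → ℂ} {p : ℝ × ℝ} (hw : ContDiffOn ℝ (⊤ : ℕ∞) w Uo) (hp : p ∈ Uo) :
    HasDerivAt (fun s => w (p.1, s)) (pr w p) p.2 := by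
  have h := hasDerivAt_slice_r (diffAt_of_contDiffOn hw hp)
  rwa [pr_eq_fderiv (diffAt_of_contDiffOn hw hp)]

lemma sliceT {w : ℝ × ℝ → ℂ} {p : ℝ × ℝ} (hw : ContDiffOn ℝ (⊤ : ℕ∞) w Uo) (hp : p ∈ Uo) :
    HasDerivAt (fun s => w (s, p.2)) (pt w p) p.1 := by
  have h := hasDerivAt_slice_t (diffAt_of_contDiffOn hw hp)
  rwa [pt_eq_fderiv (diffAt_of_contDiffOn hw hp)]

lemma contDiffOn_pr {w : ℝ × ℝ → ℂ} (hw : ContDiffOn ℝ (⊤ : ℕ∞) w Uo) :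
    ContDiffOn ℝ (⊤ : ℕ∞) (pr w) Uo := by
  have h1 : ContDiffOn ℝ (⊤ : ℕ∞) (fderiv ℝ w) Uo :=
    hw.fderiv_of_isOpen isOpen_Uo (by norm_cast)
  have h2 : ContDiffOn ℝ (⊤ : ℕ∞) (fun q => fderiv ℝ w q ((0 : ℝ), (1 : ℝ))) Uo :=
    h1.clm_apply contDiffOn_const
  exact h2.congr fun q hq => pr_eq_fderiv (diffAt_of_contDiffOn hw hq)

lemma contDiffOn_pt {w : ℝ × ℝ → ℂ} (hw : ContDiffOn ℝ (⊤ : ℕ∞) w Uo) :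
    ContDiffOn ℝ (⊤ : ℕ∞) (pt w) Uo := by
  have h1 : ContDiffOn ℝ (⊤ : ℕ∞) (fderiv ℝ w) Uo :=
    hw.fderiv_of_isOpen isOpen_Uo (by norm_cast)
  have h2 : ContDiffOn ℝ (⊤ : ℕ∞) (fun q => fderiv ℝ w q ((1 : ℝ), (0 : ℝ))) Uo :=
    h1.clm_apply contDiffOn_const
  exact h2.congr fun q hq => pt_eq_fderiv (diffAt_of_contDiffOn hw hq)

/-- Clairaut: mixed partials agree on `Uo`. -/
lemma swap_pt_pr {w : ℝ × ℝ → ℂ} {p : ℝ × ℝ} (hw : ContDiffOn ℝ (⊤ : ℕ∞) w Uo) (hp : p ∈ Uo) :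
    pt (pr w) p = pr (pt w) p := by
  have hsym : IsSymmSndFDerivAt ℝ w p :=
    (hw.contDiffAt (isOpen_Uo.mem_nhds hp)).isSymmSndFDerivAt (by simp; exact WithTop.coe_le_coe.2 (le_top : (2 : ℕ∞) ≤ ⊤))
  have hfdC : ContDiffOn ℝ (⊤ : ℕ∞) (fderiv ℝ w) Uo :=
    hw.fderiv_of_isOpen isOpen_Uo (by norm_cast)
  have hfd : DifferentiableAt ℝ (fderiv ℝ w) p :=
    (hfdC.contDiffAt (isOpen_Uo.mem_nhds hp)).differentiableAt (by norm_cast)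
  have e1 : pt (pr w) p = (fderiv ℝ (fderiv ℝ w) p ((1 : ℝ), (0 : ℝ))) ((0 : ℝ), (1 : ℝ)) := by
    have h1 : HasDerivAt (fun s : ℝ => (s, (p.2 : ℝ))) ((1 : ℝ), (0 : ℝ)) p.1 :=
      (hasDerivAt_id _).prodMk (hasDerivAt_const _ _)
    have hcurve : HasDerivAt (fun s : ℝ => fderiv ℝ w (s, p.2))
        (fderiv ℝ (fderiv ℝ w) p ((1 : ℝ), (0 : ℝ))) p.1 := by
      simpa [Function.comp_def] using hfd.hasFDerivAt.comp_hasDerivAt p.1 h1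
    have h2 : HasDerivAt (fun s : ℝ => fderiv ℝ w (s, p.2) ((0 : ℝ), (1 : ℝ)))
        ((fderiv ℝ (fderiv ℝ w) p ((1 : ℝ), (0 : ℝ))) ((0 : ℝ), (1 : ℝ))) p.1 := by
      simpa using hcurve.clm_apply (hasDerivAt_const p.1 ((0 : ℝ), (1 : ℝ)))
    have hev : (fun s : ℝ => pr w (s, p.2)) =ᶠ[𝓝 p.1]
        (fun s => fderiv ℝ w (s, p.2) ((0 : ℝ), (1 : ℝ))) := by
      filter_upwards [near_t hp] with s hs
      exact pr_eq_fderiv (diffAt_of_contDiffOn hw hs)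
    calc pt (pr w) p = deriv (fun s => pr w (s, p.2)) p.1 := rfl
      _ = deriv (fun s => fderiv ℝ w (s, p.2) ((0 : ℝ), (1 : ℝ))) p.1 := hev.deriv_eq
      _ = _ := h2.deriv
  have e2 : pr (pt w) p = (fderiv ℝ (fderiv ℝ w) p ((0 : ℝ), (1 : ℝ))) ((1 : ℝ), (0 : ℝ)) := by
    have h1 : HasDerivAt (fun s : ℝ => ((p.1 : ℝ), s)) ((0 : ℝ), (1 : ℝ)) p.2 :=
      (hasDerivAt_const _ _).prodMk (hasDerivAt_id _)
    have hcurve : HasDerivAt (fun s : ℝ => fderiv ℝ w (p.1, s))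
        (fderiv ℝ (fderiv ℝ w) p ((0 : ℝ), (1 : ℝ))) p.2 := by
      simpa [Function.comp_def] using hfd.hasFDerivAt.comp_hasDerivAt p.2 h1
    have h2 : HasDerivAt (fun s : ℝ => fderiv ℝ w (p.1, s) ((1 : ℝ), (0 : ℝ)))
        ((fderiv ℝ (fderiv ℝ w) p ((0 : ℝ), (1 : ℝ))) ((1 : ℝ), (0 : ℝ))) p.2 := by
      simpa using hcurve.clm_apply (hasDerivAt_const p.2 ((1 : ℝ), (0 : ℝ)))
    have hev : (fun s : ℝ => pt w (p.1, s)) =ᶠ[𝓝 p.2]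
        (fun s => fderiv ℝ w (p.1, s) ((1 : ℝ), (0 : ℝ))) := by
      filter_upwards [near_r hp] with s hs
      exact pt_eq_fderiv (diffAt_of_contDiffOn hw hs)
    calc pr (pt w) p = deriv (fun s => pt w (p.1, s)) p.2 := rfl
      _ = deriv (fun s => fderiv ℝ w (p.1, s) ((1 : ℝ), (0 : ℝ))) p.2 := hev.deriv_eq
      _ = _ := h2.deriv
  rw [e1, e2, hsym.eq]

lemma hpiC : ((Real.pi : ℝ) : ℂ) ≠ 0 := Complex.ofReal_ne_zero.2 Real.pi_ne_zero

/-! ### Smoothness of the Euclidean heat kernel -/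

lemma contDiffOn_Gf : ContDiffOn ℝ (⊤ : ℕ∞) Gf Uo := by
  intro p hp
  have ht : (0 : ℝ) < p.1 := hp.1
  have h2t : (0 : ℝ) < 2 * Real.pi * p.1 := by positivity
  have hden : ContDiffAt ℝ (⊤ : ℕ∞) (fun q : ℝ × ℝ => Real.sqrt (2 * Real.pi * q.1)) p :=
    (Real.contDiffAt_sqrt (ne_of_gt h2t)).comp p (contDiff_const.mul contDiff_fst).contDiffAt
  have hinner : ContDiffAt ℝ (⊤ : ℕ∞) (fun q : ℝ × ℝ => -(q.2 ^ 2) / (2 * q.1)) p := by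
    apply ContDiffAt.div
    · exact ((contDiff_snd.pow 2).neg).contDiffAt
    · exact (contDiff_const.mul contDiff_fst).contDiffAt
    · positivity
  have hnum : ContDiffAt ℝ (⊤ : ℕ∞) (fun q : ℝ × ℝ => Real.exp (-(q.2 ^ 2) / (2 * q.1))) p :=
    Real.contDiff_exp.contDiffAt.comp p hinner
  have hreal : ContDiffAt ℝ (⊤ : ℕ∞)
      (fun q : ℝ × ℝ => Real.exp (-(q.2 ^ 2) / (2 * q.1)) / Real.sqrt (2 * Real.pi * q.1)) p :=
    hnum.div hden (by positivity)
  exact (Complex.ofRealCLM.contDiff.contDiffAt.comp p hreal).contDiffWithinAt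

/-! ### Derivatives of the Euclidean heat kernel -/

lemma hasDerivAt_G_inner (t r : ℝ) :
    HasDerivAt (fun s : ℝ => -(s ^ 2) / (2 * t)) (-(r / t)) r := by
  have h := ((hasDerivAt_pow 2 r).neg).div_const (2 * t)
  refine h.congr_deriv ?_
  push_cast
  ring

lemma hasDerivAt_G_r (t r : ℝ) :
    HasDerivAt (fun s => Gf (t, s))
      (((Real.exp (-(r ^ 2) / (2 * t)) * (-(r / t)) / Real.sqrt (2 * Real.pi * t) : ℝ) : ℂ)) r :=
 by
  have h := (((hasDerivAt_G_inner t r).exp).div_const (Real.sqrt (2 * Real.pi * t))).ofReal_comp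
  exact h

lemma hasDerivAt_G_rr (t : ℝ) (ht : 0 < t) (r : ℝ) :
    HasDerivAt (fun s : ℝ =>
        ((Real.exp (-(s ^ 2) / (2 * t)) * (-(s / t)) / Real.sqrt (2 * Real.pi * t) : ℝ) : ℂ))
      (((Real.exp (-(r ^ 2) / (2 * t)) * ((r ^ 2 - t) / t ^ 2) / Real.sqrt (2 * Real.pi * t) : ℝ)
        : ℂ)) r := by
  have ht' : t ≠ 0 := ne_of_gt ht
  have hS : Real.sqrt (2 * Real.pi * t) ≠ 0 := by positivity
  have hE := (hasDerivAt_G_inner t r).exp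
  have hlin : HasDerivAt (fun s : ℝ => -(s / t)) (-(1 / t)) r := by
    exact ((hasDerivAt_id r).div_const t).neg
  have h2 := (hE.mul hlin).div_const (Real.sqrt (2 * Real.pi * t))
  have h3 : HasDerivAt
      (fun s : ℝ => Real.exp (-(s ^ 2) / (2 * t)) * (-(s / t)) / Real.sqrt (2 * Real.pi * t))
      (Real.exp (-(r ^ 2) / (2 * t)) * ((r ^ 2 - t) / t ^ 2) / Real.sqrt (2 * Real.pi * t)) r := by
    refine h2.congr_deriv ?_
    field_simp
    ring
  exact h3.ofReal_comp

lemma hasDerivAt_G_t (t : ℝ) (ht : 0 < t) (r : ℝ) :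
    HasDerivAt (fun u => Gf (u, r))
      (((Real.exp (-(r ^ 2) / (2 * t)) * (r ^ 2 / (2 * t ^ 2) - 1 / (2 * t))
          / Real.sqrt (2 * Real.pi * t) : ℝ) : ℂ)) t := by
  have ht' : t ≠ 0 := ne_of_gt ht
  have hq : (0 : ℝ) < 2 * Real.pi * t := by positivity
  have hS : Real.sqrt (2 * Real.pi * t) ≠ 0 := by positivity
  have h1 : HasDerivAt (fun u : ℝ => -(r ^ 2) / (2 * u)) (r ^ 2 / (2 * t ^ 2)) t := by
    have h := (hasDerivAt_const t (-(r ^ 2))).div ((hasDerivAt_id t).const_mul (2 : ℝ))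
      (by simpa using ht')
    refine h.congr_deriv ?_
    simp only [id]
    field_simp
    ring
  have hE := h1.exp
  have hSd : HasDerivAt (fun u : ℝ => Real.sqrt (2 * Real.pi * u))
      (Real.pi / Real.sqrt (2 * Real.pi * t)) t := by
    have h := (Real.hasDerivAt_sqrt (ne_of_gt hq)).comp t ((hasDerivAt_id t).const_mul
      (2 * Real.pi))
    have h' : HasDerivAt (fun u : ℝ => Real.sqrt (2 * Real.pi * u))
        (1 / (2 * Real.sqrt (2 * Real.pi * t)) * (2 * Real.pi * 1)) t := h
    refine h'.congr_deriv ?_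
    field_simp
  have h2 := hE.div hSd hS
  have h3 : HasDerivAt (fun u : ℝ => Real.exp (-(r ^ 2) / (2 * u)) / Real.sqrt (2 * Real.pi * u))
      (Real.exp (-(r ^ 2) / (2 * t)) * (r ^ 2 / (2 * t ^ 2) - 1 / (2 * t))
        / Real.sqrt (2 * Real.pi * t)) t := by
    refine h2.congr_deriv ?_
    have hS2 : Real.sqrt (2 * Real.pi * t) ^ 2 = 2 * Real.pi * t := Real.sq_sqrt hq.le
    generalize hgen : Real.sqrt (2 * Real.pi * t) = S at hS hS2 ⊢
    field_simp
    linear_combination t * hS2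
  exact h3.ofReal_comp

/-! ### The heat equation for the Euclidean kernel -/

lemma base_pde {p : ℝ × ℝ} (hp : p ∈ Uo) : pt Gf p = (1 / 2 : ℂ) * pr (pr Gf) p := by
  have ht : (0 : ℝ) < p.1 := hp.1
  have ht' : p.1 ≠ 0 := ne_of_gt ht
  have hS : Real.sqrt (2 * Real.pi * p.1) ≠ 0 := by positivity
  have hpt : pt Gf p
      = ((Real.exp (-(p.2 ^ 2) / (2 * p.1)) * (p.2 ^ 2 / (2 * p.1 ^ 2) - 1 / (2 * p.1))
          / Real.sqrt (2 * Real.pi * p.1) : ℝ) : ℂ) := (hasDerivAt_G_t p.1 ht p.2).deriv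
  have hfun : (fun s => pr Gf (p.1, s)) = fun s : ℝ =>
      ((Real.exp (-(s ^ 2) / (2 * p.1)) * (-(s / p.1)) / Real.sqrt (2 * Real.pi * p.1) : ℝ) : ℂ) :=
    funext fun s => (hasDerivAt_G_r p.1 s).deriv
  have hprr : pr (pr Gf) p
      = ((Real.exp (-(p.2 ^ 2) / (2 * p.1)) * ((p.2 ^ 2 - p.1) / p.1 ^ 2)
          / Real.sqrt (2 * Real.pi * p.1) : ℝ) : ℂ) := by
    show deriv (fun s => pr Gf (p.1, s)) p.2 = _
    rw [hfun]
    exact (hasDerivAt_G_rr p.1 ht p.2).deriv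
  rw [hpt, hprr, show (1 / 2 : ℂ) = ((1 / 2 : ℝ) : ℂ) by norm_num, ← Complex.ofReal_mul,
    Complex.ofReal_inj]
  field_simp

/-! ### Structure of the shift operator -/

lemma Lw_eq (w : ℝ × ℝ → ℂ) :
    Lw w = fun p => -(1 / (2 * (Real.pi : ℂ))) * pr w p / (Real.sinh p.2 : ℂ) := rfl

lemma sinh_ne_zero_C {x : ℝ} (hx : x ≠ 0) : ((Real.sinh x : ℝ) : ℂ) ≠ 0 :=
  Complex.ofReal_ne_zero.2 (Real.sinh_ne_zero.2 hx)

lemma hasDerivAt_sinh_C (x : ℝ) :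
    HasDerivAt (fun s : ℝ => ((Real.sinh s : ℝ) : ℂ)) ((Real.cosh x : ℝ) : ℂ) x :=
  (Real.hasDerivAt_sinh x).ofReal_comp

lemma hasDerivAt_cosh_C (x : ℝ) :
    HasDerivAt (fun s : ℝ => ((Real.cosh s : ℝ) : ℂ)) ((Real.sinh x : ℝ) : ℂ) x :=
  (Real.hasDerivAt_cosh x).ofReal_comp

lemma contDiffOn_Lw {w : ℝ × ℝ → ℂ} (hC : ContDiffOn ℝ (⊤ : ℕ∞) w Uo) :
    ContDiffOn ℝ (⊤ : ℕ∞) (Lw w) Uo := by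
  rw [Lw_eq w]
  intro p hp
  have hs : ContDiffAt ℝ (⊤ : ℕ∞) (fun q : ℝ × ℝ => ((Real.sinh q.2 : ℝ) : ℂ)) p :=
    (Complex.ofRealCLM.contDiff.comp (Real.contDiff_sinh.comp contDiff_snd)).contDiffAt
  have hinv : ContDiffAt ℝ (⊤ : ℕ∞) (fun q : ℝ × ℝ => ((Real.sinh q.2 : ℝ) : ℂ)⁻¹) p :=
    (contDiffAt_inv (𝕜 := ℝ) (sinh_ne_zero_C hp.2)).comp p hs
  have hm : ContDiffAt ℝ (⊤ : ℕ∞) (pr w) p :=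
    (contDiffOn_pr hC).contDiffAt (isOpen_Uo.mem_nhds hp)
  have : ContDiffAt ℝ (⊤ : ℕ∞)
      (fun q : ℝ × ℝ => -(1 / (2 * (Real.pi : ℂ))) * pr w q / (Real.sinh q.2 : ℂ)) p := by
    simp only [div_eq_mul_inv]
    exact (contDiffAt_const.mul hm).mul hinv
  exact this.contDiffWithinAt

lemma pt_Lw (w : ℝ × ℝ → ℂ) (p : ℝ × ℝ) :
    pt (Lw w) p = -(1 / (2 * (Real.pi : ℂ))) * pt (pr w) p / (Real.sinh p.2 : ℂ) := by
  show deriv (fun s => Lw w (s, p.2)) p.1 = _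
  have h : (fun s => Lw w (s, p.2))
      = fun s => -(1 / (2 * (Real.pi : ℂ))) * pr w (s, p.2) / (Real.sinh p.2 : ℂ) := rfl
  rw [h, deriv_div_const, deriv_const_mul_field]
  rfl

lemma pr_Lw {w : ℝ × ℝ → ℂ} (hC : ContDiffOn ℝ (⊤ : ℕ∞) w Uo) {p : ℝ × ℝ} (hp : p ∈ Uo) :
    pr (Lw w) p = (-(1 / (2 * (Real.pi : ℂ))) * pr (pr w) p * (Real.sinh p.2 : ℂ)
        - -(1 / (2 * (Real.pi : ℂ))) * pr w p * (Real.cosh p.2 : ℂ)) / (Real.sinh p.2 : ℂ) ^ 2 := by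
  have hsh := sinh_ne_zero_C hp.2
  have hB := sliceR (contDiffOn_pr hC) hp
  have h := (hB.const_mul (-(1 / (2 * (Real.pi : ℂ))))).div (hasDerivAt_sinh_C p.2) hsh
  exact h.deriv

lemma prpr_Lw {w : ℝ × ℝ → ℂ} (hC : ContDiffOn ℝ (⊤ : ℕ∞) w Uo) {p : ℝ × ℝ} (hp : p ∈ Uo) :
    pr (pr (Lw w)) p =
      (-(1 / (2 * (Real.pi : ℂ))) * ((pr (pr (pr w)) p - pr w p) * (Real.sinh p.2 : ℂ) ^ 2
        - 2 * (Real.cosh p.2 : ℂ)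
          * (pr (pr w) p * (Real.sinh p.2 : ℂ) - pr w p * (Real.cosh p.2 : ℂ))))
        / (Real.sinh p.2 : ℂ) ^ 3 := by
  have hsh := sinh_ne_zero_C hp.2
  have hprC := contDiffOn_pr hC
  have hB := sliceR hprC hp
  have hD := sliceR (contDiffOn_pr hprC) hp
  have hev : (fun s => pr (Lw w) (p.1, s)) =ᶠ[nhds p.2] (fun s =>
      (-(1 / (2 * (Real.pi : ℂ))) * pr (pr w) (p.1, s) * (Real.sinh s : ℂ)
        - -(1 / (2 * (Real.pi : ℂ))) * pr w (p.1, s) * (Real.cosh s : ℂ))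
        / ((Real.sinh s : ℂ) * (Real.sinh s : ℂ))) := by
    filter_upwards [near_r hp] with s hs
    rw [pr_Lw hC hs, pow_two]
  have h1 : pr (pr (Lw w)) p = deriv (fun s =>
      (-(1 / (2 * (Real.pi : ℂ))) * pr (pr w) (p.1, s) * (Real.sinh s : ℂ)
        - -(1 / (2 * (Real.pi : ℂ))) * pr w (p.1, s) * (Real.cosh s : ℂ))
        / ((Real.sinh s : ℂ) * (Real.sinh s : ℂ))) p.2 := hev.deriv_eq
  have hnum := ((hD.const_mul (-(1 / (2 * (Real.pi : ℂ))))).mul (hasDerivAt_sinh_C p.2)).sub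
    ((hB.const_mul (-(1 / (2 * (Real.pi : ℂ))))).mul (hasDerivAt_cosh_C p.2))
  have hden := (hasDerivAt_sinh_C p.2).mul (hasDerivAt_sinh_C p.2)
  have hder := hnum.div hden (mul_ne_zero hsh hsh)
  refine h1.trans (hder.deriv.trans ?_)
  simp only [Prod.mk.eta, Pi.mul_apply, Pi.sub_apply, Pi.div_apply]
  have hpi := hpiC
  have hsh' : Complex.sinh (p.2 : ℂ) ≠ 0 := by
    rw [← Complex.ofReal_sinh]; exact hsh
  field_simp [hpi, hsh']
  ring


lemma step_algebra (pi sh ch a b d N : ℂ) (hpi : pi ≠ 0) (hsh : sh ≠ 0) :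
    -(1 / (2 * pi)) * ((1 / 2) * d + (N * ((sh * sh - ch * ch) / sh ^ 2) * a
        + N * (ch / sh) * b) + (N ^ 2 / 2) * a) / sh
    = 1 / 2 * ((-(1 / (2 * pi)) * ((d - a) * sh ^ 2 - 2 * ch * (b * sh - a * ch))) / sh ^ 3)
      + (N + 1) * (ch / sh) * ((-(1 / (2 * pi)) * b * sh - -(1 / (2 * pi)) * a * ch) / sh ^ 2)
      + ((N + 1) ^ 2 / 2) * (-(1 / (2 * pi)) * a / sh) := by
  have h1 : sh * sh⁻¹ = 1 := mul_inv_cancel₀ hsh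
  linear_combination (d * sh⁻¹ * pi⁻¹ * (sh * sh⁻¹ + 1) / 4
    + N * b * ch * sh⁻¹ ^ 2 * pi⁻¹ / 2
    - (2 * N + 1) * a * sh⁻¹ * pi⁻¹ * (sh * sh⁻¹ + 1) / 4) * h1

/-! ### The key induction -/

lemma key (n : ℕ) : ContDiffOn ℝ (⊤ : ℕ∞) (Lw^[n] Gf) Uo ∧
    ∀ p ∈ Uo, pt (Lw^[n] Gf) p
      = (1 / 2 : ℂ) * pr (pr (Lw^[n] Gf)) p
        + (n : ℂ) * ((Real.cosh p.2 : ℂ) / (Real.sinh p.2 : ℂ)) * pr (Lw^[n] Gf) p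
        + ((n : ℂ) ^ 2 / 2) * Lw^[n] Gf p := by
  induction n with
  | zero =>
    simp only [Function.iterate_zero, id_eq, Nat.cast_zero, zero_mul, ne_eq,
      OfNat.ofNat_ne_zero, not_false_eq_true, zero_pow, zero_div, add_zero]
    exact ⟨contDiffOn_Gf, fun p hp => base_pde hp⟩
  | succ n ih =>
    obtain ⟨hC, hP⟩ := ih
    simp only [Function.iterate_succ_apply']
    refine ⟨contDiffOn_Lw hC, fun p hp => ?_⟩
    have hpi := hpiC
    have hsh := sinh_ne_zero_C hp.2
    have hprC := contDiffOn_pr hC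
    have hA := sliceR hC hp
    have hB := sliceR hprC hp
    have hD := sliceR (contDiffOn_pr hprC) hp
    -- time derivative of Lw w via Clairaut and the induction hypothesis
    have hswap : pt (pr (Lw^[n] Gf)) p = pr (pt (Lw^[n] Gf)) p := swap_pt_pr hC hp
    have hev2 : (fun s => pt (Lw^[n] Gf) (p.1, s)) =ᶠ[nhds p.2] (fun s =>
        (1 / 2 : ℂ) * pr (pr (Lw^[n] Gf)) (p.1, s)
          + (n : ℂ) * ((Real.cosh s : ℂ) / (Real.sinh s : ℂ)) * pr (Lw^[n] Gf) (p.1, s)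
          + ((n : ℂ) ^ 2 / 2) * Lw^[n] Gf (p.1, s)) := by
      filter_upwards [near_r hp] with s hs
      exact hP (p.1, s) hs
    have h1 : pr (pt (Lw^[n] Gf)) p = deriv (fun s =>
        (1 / 2 : ℂ) * pr (pr (Lw^[n] Gf)) (p.1, s)
          + (n : ℂ) * ((Real.cosh s : ℂ) / (Real.sinh s : ℂ)) * pr (Lw^[n] Gf) (p.1, s)
          + ((n : ℂ) ^ 2 / 2) * Lw^[n] Gf (p.1, s)) p.2 := hev2.deriv_eq
    have hcoth := (hasDerivAt_cosh_C p.2).div (hasDerivAt_sinh_C p.2) hsh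
    have hders := ((hD.const_mul (1 / 2 : ℂ)).add
      ((hcoth.const_mul (n : ℂ)).mul hB)).add (hA.const_mul ((n : ℂ) ^ 2 / 2))
    have hptw : pr (pt (Lw^[n] Gf)) p
        = (1 / 2 : ℂ) * pr (pr (pr (Lw^[n] Gf))) p
          + ((n : ℂ) * (((Real.sinh p.2 : ℂ) * (Real.sinh p.2 : ℂ)
              - (Real.cosh p.2 : ℂ) * (Real.cosh p.2 : ℂ)) / (Real.sinh p.2 : ℂ) ^ 2)
              * pr (Lw^[n] Gf) p
            + (n : ℂ) * ((Real.cosh p.2 : ℂ) / (Real.sinh p.2 : ℂ)) * pr (pr (Lw^[n] Gf)) p)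
          + ((n : ℂ) ^ 2 / 2) * pr (Lw^[n] Gf) p := by
      rw [h1]
      have := hders.deriv
      simp only [Prod.mk.eta, Pi.add_apply, Pi.mul_apply, Pi.div_apply] at this
      exact this.trans (by ring)
    rw [pt_Lw, hswap, hptw, prpr_Lw hC hp, pr_Lw hC hp]
    have hv : Lw (Lw^[n] Gf) p
        = -(1 / (2 * (Real.pi : ℂ))) * pr (Lw^[n] Gf) p / (Real.sinh p.2 : ℂ) := rfl
    rw [hv]
    have hsh' : Complex.sinh (p.2 : ℂ) ≠ 0 := by
      rw [← Complex.ofReal_sinh]; exact hsh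
    push_cast
    linear_combination step_algebra (Real.pi : ℂ) (Complex.sinh (p.2 : ℂ))
      (Complex.cosh (p.2 : ℂ)) (pr (Lw^[n] Gf) p) (pr (pr (Lw^[n] Gf)) p)
      (pr (pr (pr (Lw^[n] Gf))) p) (n : ℂ) hpi hsh'

/-! ### Relating `Lhyp` iterates to `Lw` iterates -/

lemma iterate_slice (n : ℕ) : ∀ (w : ℝ × ℝ → ℂ) (t : ℝ),
    Lhyp^[n] (fun s => w (t, s)) = fun r => Lw^[n] w (t, r) := by
  induction n with
  | zero => intro w t; rfl
  | succ n ih =>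
    intro w t
    rw [Function.iterate_succ_apply, Function.iterate_succ_apply]
    have h1 : Lhyp (fun s => w (t, s)) = fun s => Lw w (t, s) := rfl
    rw [h1]
    exact ih (Lw w) t

/-- `γ` satisfies the radial heat equation on `H^{2n+1}`. -/
theorem stmt_4 (n : ℕ) (hn : 1 ≤ n) (t : ℝ) (ht : 0 < t) (r : ℝ) (hr : r ≠ 0) :
    deriv (fun u : ℝ => gammaHyp n u r) t
      = (1 / 2) * (deriv (deriv (gammaHyp n t)) r
          + 2 * (n : ℂ) * ((Real.cosh r : ℂ) / (Real.sinh r : ℂ)) * deriv (gammaHyp n t) r) := by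
  obtain ⟨hC, hP⟩ := key n
  have hp : ((t, r) : ℝ × ℝ) ∈ Uo := ⟨ht, hr⟩
  have hgam : ∀ u s : ℝ, gammaHyp n u s
      = ((Real.exp (-(u * (n : ℝ) ^ 2) / 2) : ℝ) : ℂ) * Lw^[n] Gf (u, s) := by
    intro u s
    have h := congrFun (iterate_slice n Gf u) s
    exact congrArg (fun z => ((Real.exp (-(u * (n : ℝ) ^ 2) / 2) : ℝ) : ℂ) * z) h
  have hEt : HasDerivAt (fun u : ℝ => ((Real.exp (-(u * (n : ℝ) ^ 2) / 2) : ℝ) : ℂ))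
      ((Real.exp (-(t * (n : ℝ) ^ 2) / 2) * (-((n : ℝ) ^ 2) / 2) : ℝ) : ℂ) t := by
    have h0 : HasDerivAt (fun u : ℝ => -(u * (n : ℝ) ^ 2) / 2) (-((n : ℝ) ^ 2) / 2) t := by
      have := ((hasDerivAt_id t).mul_const ((n : ℝ) ^ 2)).neg.div_const 2
      refine this.congr_deriv ?_
      ring
    exact (h0.exp).ofReal_comp
  have hWt : HasDerivAt (fun u => Lw^[n] Gf (u, r)) (pt (Lw^[n] Gf) (t, r)) t := sliceT hC hp
  have hL : deriv (fun u : ℝ => gammaHyp n u r) t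
      = ((Real.exp (-(t * (n : ℝ) ^ 2) / 2) * (-((n : ℝ) ^ 2) / 2) : ℝ) : ℂ) * Lw^[n] Gf (t, r)
        + ((Real.exp (-(t * (n : ℝ) ^ 2) / 2) : ℝ) : ℂ) * pt (Lw^[n] Gf) (t, r) := by
    have hfun : (fun u : ℝ => gammaHyp n u r)
        = fun u => ((Real.exp (-(u * (n : ℝ) ^ 2) / 2) : ℝ) : ℂ) * Lw^[n] Gf (u, r) :=
      funext fun u => hgam u r
    rw [hfun]
    exact (hEt.mul hWt).deriv
  have hR1 : ∀ s, deriv (gammaHyp n t) s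
      = ((Real.exp (-(t * (n : ℝ) ^ 2) / 2) : ℝ) : ℂ) * pr (Lw^[n] Gf) (t, s) := by
    intro s
    have hfun : gammaHyp n t
        = fun x => ((Real.exp (-(t * (n : ℝ) ^ 2) / 2) : ℝ) : ℂ) * Lw^[n] Gf (t, x) :=
      funext fun x => hgam t x
    rw [hfun, deriv_const_mul_field]
    rfl
  have hR2 : deriv (deriv (gammaHyp n t)) r
      = ((Real.exp (-(t * (n : ℝ) ^ 2) / 2) : ℝ) : ℂ) * pr (pr (Lw^[n] Gf)) (t, r) := by
    have hfun : deriv (gammaHyp n t)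
        = fun s => ((Real.exp (-(t * (n : ℝ) ^ 2) / 2) : ℝ) : ℂ) * pr (Lw^[n] Gf) (t, s) :=
      funext hR1
    rw [hfun, deriv_const_mul_field]
    rfl
  have hP' := hP (t, r) hp
  dsimp only at hP'
  rw [hL, hR2, hR1 r, hP']
  push_cast
  ring
end
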